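/- Let μ ∈ ℍ be nonzero and let f₁, f₂, f₃, f₄ ∈ ℍ. If f₁·(h^μ)* + f₂·(h^{μi})* + f₃·(h^{μj})* + f₄·(h^{μk})* = 0 for every h ∈ ℍ, then f₁ = f₂ = f₃ = f₄ = 0. -/

import Mathlib

open Quaternion Filter Topology Asymptotics

noncomputable section

/-- The imaginary unit `i` of the real quaternions. -/
def qI : ℍ[ℝ] := ⟨0, 1, 0, 0⟩
/-- The imaginary unit `j` of the real quaternions. -/
def qJ : ℍ[ℝ] := ⟨0, 0, 1, 0⟩
/-- The imaginary unit `k` of the real quaternions. -/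
def qK : ℍ[ℝ] := ⟨0, 0, 0, 1⟩

/-- Quaternion rotation `p ↦ μ p μ⁻¹`. -/
def qRot (μ p : ℍ[ℝ]) : ℍ[ℝ] := μ * p * μ⁻¹

/-- The left GHR derivative `∂f/∂q^μ` at `q`. -/
def lD (f : ℍ[ℝ] → ℍ[ℝ]) (μ q : ℍ[ℝ]) : ℍ[ℝ] :=
  (4 : ℍ[ℝ])⁻¹ * (fderiv ℝ f q 1 - fderiv ℝ f q qI * qRot μ qI
    - fderiv ℝ f q qJ * qRot μ qJ - fderiv ℝ f q qK * qRot μ qK)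

/-- The left conjugate GHR derivative `∂f/∂q^{μ*}` at `q`. -/
def lDc (f : ℍ[ℝ] → ℍ[ℝ]) (μ q : ℍ[ℝ]) : ℍ[ℝ] :=
  (4 : ℍ[ℝ])⁻¹ * (fderiv ℝ f q 1 + fderiv ℝ f q qI * qRot μ qI
    + fderiv ℝ f q qJ * qRot μ qJ + fderiv ℝ f q qK * qRot μ qK)

/-- The right GHR derivative `∂ᵣf/∂q^μ` at `q`. -/
def rD (f : ℍ[ℝ] → ℍ[ℝ]) (μ q : ℍ[ℝ]) : ℍ[ℝ] :=
  (4 : ℍ[ℝ])⁻¹ * (fderiv ℝ f q 1 - qRot μ qI * fderiv ℝ f q qI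
    - qRot μ qJ * fderiv ℝ f q qJ - qRot μ qK * fderiv ℝ f q qK)

/-- The right conjugate GHR derivative `∂ᵣf/∂q^{μ*}` at `q`. -/
def rDc (f : ℍ[ℝ] → ℍ[ℝ]) (μ q : ℍ[ℝ]) : ℍ[ℝ] :=
  (4 : ℍ[ℝ])⁻¹ * (fderiv ℝ f q 1 + qRot μ qI * fderiv ℝ f q qI
    + qRot μ qJ * fderiv ℝ f q qJ + qRot μ qK * fderiv ℝ f q qK)

@[simp] lemma qI_re : qI.re = 0 := rfl
@[simp] lemma qI_imI : qI.imI = 1 := rfl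
@[simp] lemma qI_imJ : qI.imJ = 0 := rfl
@[simp] lemma qI_imK : qI.imK = 0 := rfl
@[simp] lemma qJ_re : qJ.re = 0 := rfl
@[simp] lemma qJ_imI : qJ.imI = 0 := rfl
@[simp] lemma qJ_imJ : qJ.imJ = 1 := rfl
@[simp] lemma qJ_imK : qJ.imK = 0 := rfl
@[simp] lemma qK_re : qK.re = 0 := rfl
@[simp] lemma qK_imI : qK.imI = 0 := rfl
@[simp] lemma qK_imJ : qK.imJ = 0 := rfl
@[simp] lemma qK_imK : qK.imK = 1 := rfl

theorem left_conjugate_rotated_differentials_independent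
    (μ : ℍ[ℝ]) (hμ : μ ≠ 0) (f₁ f₂ f₃ f₄ : ℍ[ℝ])
    (h : ∀ p : ℍ[ℝ], f₁ * star (qRot μ p) + f₂ * star (qRot (μ * qI) p)
      + f₃ * star (qRot (μ * qJ) p) + f₄ * star (qRot (μ * qK) p) = 0) :
    f₁ = 0 ∧ f₂ = 0 ∧ f₃ = 0 ∧ f₄ = 0 := by
  have hI0 : qI ≠ 0 := by simp [Quaternion.ext_iff]
  have hJ0 : qJ ≠ 0 := by simp [Quaternion.ext_iff]
  have hK0 : qK ≠ 0 := by simp [Quaternion.ext_iff]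
  have hIinv : qI⁻¹ = -qI :=
    inv_eq_of_mul_eq_one_right (by ext <;> simp)
  have hJinv : qJ⁻¹ = -qJ :=
    inv_eq_of_mul_eq_one_right (by ext <;> simp)
  have hKinv : qK⁻¹ = -qK :=
    inv_eq_of_mul_eq_one_right (by ext <;> simp)
  have key : ∀ u v w : ℍ[ℝ], u⁻¹ = -u → u * v * -u = w →
      qRot (μ * u) v = μ * w * μ⁻¹ := by
    intro u v w hu hw
    simp only [qRot, mul_inv_rev, hu, ← hw]
    noncomm_ring
  -- evaluate at 1
  have e1 : f₁ + f₂ + f₃ + f₄ = 0 := by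
    have h1 := h 1
    rw [show qRot μ 1 = 1 by simp [qRot, mul_inv_cancel₀ hμ],
      show qRot (μ * qI) 1 = 1 by rw [qRot, mul_one, mul_inv_cancel₀ (mul_ne_zero hμ hI0)],
      show qRot (μ * qJ) 1 = 1 by rw [qRot, mul_one, mul_inv_cancel₀ (mul_ne_zero hμ hJ0)],
      show qRot (μ * qK) 1 = 1 by rw [qRot, mul_one, mul_inv_cancel₀ (mul_ne_zero hμ hK0)]]
      at h1
    simpa using h1
  have cancel : ∀ (v : ℍ[ℝ]) (g : ℍ[ℝ]), v ≠ 0 →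
      g * star (μ * v * μ⁻¹) = 0 → g = 0 := by
    intro v g hv hg
    have hs : star (μ * v * μ⁻¹) ≠ 0 :=
      star_ne_zero.2 (mul_ne_zero (mul_ne_zero hμ hv) (inv_ne_zero hμ))
    exact (mul_eq_zero.mp hg).resolve_right hs
  -- evaluate at qI
  have e2 : f₁ + f₂ - f₃ - f₄ = 0 := by
    have h2 := h qI
    rw [show qRot μ qI = μ * qI * μ⁻¹ from rfl,
      key qI qI qI hIinv (by ext <;> simp),
      key qJ qI (-qI) hJinv (by ext <;> simp),
      key qK qI (-qI) hKinv (by ext <;> simp)] at h2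
    refine cancel qI _ hI0 ?_
    rw [← h2]; simp only [mul_neg, neg_mul, star_neg]; noncomm_ring
  -- evaluate at qJ
  have e3 : f₁ - f₂ + f₃ - f₄ = 0 := by
    have h3 := h qJ
    rw [show qRot μ qJ = μ * qJ * μ⁻¹ from rfl,
      key qI qJ (-qJ) hIinv (by ext <;> simp),
      key qJ qJ qJ hJinv (by ext <;> simp),
      key qK qJ (-qJ) hKinv (by ext <;> simp)] at h3
    refine cancel qJ _ hJ0 ?_
    rw [← h3]; simp only [mul_neg, neg_mul, star_neg]; noncomm_ring
  -- evaluate at qK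
  have e4 : f₁ - f₂ - f₃ + f₄ = 0 := by
    have h4 := h qK
    rw [show qRot μ qK = μ * qK * μ⁻¹ from rfl,
      key qI qK (-qK) hIinv (by ext <;> simp),
      key qJ qK (-qK) hJinv (by ext <;> simp),
      key qK qK qK hKinv (by ext <;> simp)] at h4
    refine cancel qK _ hK0 ?_
    rw [← h4]; simp only [mul_neg, neg_mul, star_neg]; noncomm_ring
  have h4ne : (4 : ℍ[ℝ]) ≠ 0 := by
    have hco : (4 : ℍ[ℝ]) = ((4 : ℝ) : ℍ[ℝ]) := by norm_cast
    rw [hco, ← Quaternion.coe_zero, Ne, Quaternion.coe_inj]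
    norm_num
  have solve : ∀ g : ℍ[ℝ], (4 : ℍ[ℝ]) * g = 0 → g = 0 := fun g hg =>
    (mul_eq_zero.mp hg).resolve_left h4ne
  refine ⟨solve _ ?_, solve _ ?_, solve _ ?_, solve _ ?_⟩
  · calc (4 : ℍ[ℝ]) * f₁
        = (f₁ + f₂ + f₃ + f₄) + (f₁ + f₂ - f₃ - f₄)
          + (f₁ - f₂ + f₃ - f₄) + (f₁ - f₂ - f₃ + f₄) := by noncomm_ring
      _ = 0 := by rw [e1, e2, e3, e4]; simp
  · calc (4 : ℍ[ℝ]) * f₂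
        = (f₁ + f₂ + f₃ + f₄) + (f₁ + f₂ - f₃ - f₄)
          - (f₁ - f₂ + f₃ - f₄) - (f₁ - f₂ - f₃ + f₄) := by noncomm_ring
      _ = 0 := by rw [e1, e2, e3, e4]; simp
  · calc (4 : ℍ[ℝ]) * f₃
        = (f₁ + f₂ + f₃ + f₄) - (f₁ + f₂ - f₃ - f₄)
          + (f₁ - f₂ + f₃ - f₄) - (f₁ - f₂ - f₃ + f₄) := by noncomm_ring
      _ = 0 := by rw [e1, e2, e3, e4]; simp
  · calc (4 : ℍ[ℝ]) * f₄
        = (f₁ + f₂ + f₃ + f₄) - (f₁ + f₂ - f₃ - f₄)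
          - (f₁ - f₂ + f₃ - f₄) + (f₁ - f₂ - f₃ + f₄) := by noncomm_ring
      _ = 0 := by rw [e1, e2, e3, e4]; simp

end
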